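/- arXiv:2103.11839 — 3 statements merged into one kernel-verified Lean document; each statement's English description precedes it below -/
import Mathlib

section
/- Let p ≥ 1 and m ≥ 0 be integers. Then ∫₀¹ x^m Li_p(x) dx = Σ_{j=2}^{p} (−1)^{p−j}·ζ(j)/(m+1)^{p+1−j} + (−1)^{p−1}·H_{m+1}/(m+1)^{p}. -/
open MeasureTheory Finset Filter

/-- `Li p x = ∑_{n≥1} x^n / n^p`, the polylogarithm. -/
noncomputable def Li (p : ℕ) (x : ℝ) : ℝ := ∑' n : ℕ, x ^ (n + 1) / (n + 1 : ℝ) ^ p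

/-- `zr s = ζ(s) = ∑_{n≥1} n^{-s}`. -/
noncomputable def zr (s : ℕ) : ℝ := ∑' n : ℕ, 1 / (n + 1 : ℝ) ^ s

/-- `H n = ∑_{j=1}^n 1/j`, the harmonic number. -/
noncomputable def H (n : ℕ) : ℝ := ∑ j ∈ Finset.range n, 1 / ((j : ℝ) + 1)

lemma summable_inv_sq : Summable (fun n : ℕ => 1 / ((n : ℝ) + 1) ^ 2) := by
  have := (summable_nat_add_iff 1).mpr (Real.summable_one_div_nat_pow.mpr one_lt_two)
  convert this using 2 with n
  exacts [rfl, by norm_num]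

lemma summable_zr (s : ℕ) (hs : 2 ≤ s) :
    Summable (fun n : ℕ => 1 / ((n : ℝ) + 1) ^ s) := by
  refine Summable.of_nonneg_of_le (fun n => by positivity) (fun n => ?_) summable_inv_sq
  apply one_div_le_one_div_of_le (by positivity)
  exact pow_le_pow_right₀ (by linarith [Nat.cast_nonneg (α := ℝ) n]) hs

lemma summable_f (m p : ℕ) (hp : 1 ≤ p) :
    Summable (fun n : ℕ => 1 / (((n : ℝ) + 1) ^ p * ((n : ℝ) + (m : ℝ) + 2))) := by
  refine Summable.of_nonneg_of_le (fun n => by positivity) (fun n => ?_) summable_inv_sq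
  apply one_div_le_one_div_of_le (by positivity)
  have h1 : ((n : ℝ) + 1) ^ 1 ≤ ((n : ℝ) + 1) ^ p :=
    pow_le_pow_right₀ (by linarith [Nat.cast_nonneg (α := ℝ) n]) hp
  have h2 : ((n : ℝ) + 1) ≤ (n : ℝ) + (m : ℝ) + 2 := by
    have : (0:ℝ) ≤ m := Nat.cast_nonneg m
    linarith
  calc ((n:ℝ)+1)^2 = ((n:ℝ)+1)^1 * ((n:ℝ)+1) := by ring
    _ ≤ ((n:ℝ)+1)^p * ((n:ℝ)+(m:ℝ)+2) := by
        apply mul_le_mul h1 h2 (by positivity) (by positivity)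

lemma H_succ (n : ℕ) : H (n + 1) = H n + 1 / ((n : ℝ) + 1) := by
  simp [H, Finset.sum_range_succ]

lemma H_nonneg (n : ℕ) : 0 ≤ H n := by
  apply Finset.sum_nonneg; intro i _; positivity

lemma psum (m N : ℕ) :
    ∑ n ∈ Finset.range N, (1 / ((n : ℝ) + 1) - 1 / ((n : ℝ) + (m : ℝ) + 2))
      = H N + H (m + 1) - H (N + (m + 1)) := by
  induction N with
  | zero => simp [H]
  | succ N ih =>
    rw [Finset.sum_range_succ, ih,
      show N + 1 + (m + 1) = (N + (m + 1)) + 1 by omega, H_succ (N + (m + 1)), H_succ N]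
    push_cast
    ring

lemma H_diff_le (m : ℕ) : ∀ N : ℕ, H (N + m) - H N ≤ (m : ℝ) / ((N : ℝ) + 1) := by
  induction m with
  | zero => intro N; simp
  | succ m ih =>
    intro N
    have : N + (m + 1) = (N + m) + 1 := by ring
    rw [this, H_succ]
    have h2 : 1 / ((N:ℝ) + (m:ℝ) + 1) ≤ 1 / ((N:ℝ) + 1) := by
      apply one_div_le_one_div_of_le (by positivity)
      have : (0:ℝ) ≤ m := Nat.cast_nonneg m
      linarith
    have := ih N
    push_cast
    push_cast at this
    calc H (N+m) + 1/((N:ℝ)+(m:ℝ)+1) - H N ≤ (m:ℝ)/((N:ℝ)+1) + 1/((N:ℝ)+1) := by linarith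
      _ = ((m:ℝ)+1)/((N:ℝ)+1) := by ring

lemma H_mono_add (m N : ℕ) : H N ≤ H (N + m) := by
  induction m with
  | zero => simp
  | succ m ih =>
    have : N + (m + 1) = (N + m) + 1 := by ring
    rw [this, H_succ]
    have : (0:ℝ) ≤ 1 / ((N:ℝ) + (m:ℝ) + 1) := by positivity
    push_cast
    linarith

lemma tendsto_Hdiff (m : ℕ) :
    Tendsto (fun N : ℕ => H (N + m) - H N) atTop (nhds 0) := by
  have hb : Tendsto (fun N : ℕ => (m : ℝ) / ((N : ℝ) + 1)) atTop (nhds 0) := by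
    have := tendsto_one_div_add_atTop_nhds_zero_nat.const_mul (m : ℝ)
    simpa [div_eq_mul_inv, mul_comm] using this
  refine squeeze_zero (fun N => by linarith [H_mono_add m N]) (fun N => H_diff_le m N) hb

lemma base_tsum (m : ℕ) :
    ∑' n : ℕ, 1 / (((n : ℝ) + 1) ^ 1 * ((n : ℝ) + (m : ℝ) + 2))
      = H (m + 1) / ((m : ℝ) + 1) := by
  have hM : ((m : ℝ) + 1) ≠ 0 := by positivity
  have hs := summable_f m 1 le_rfl
  have hpartial : ∀ N : ℕ,
      ∑ n ∈ Finset.range N, 1 / (((n : ℝ) + 1) ^ 1 * ((n : ℝ) + (m : ℝ) + 2))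
        = (H N + H (m + 1) - H (N + (m + 1))) / ((m : ℝ) + 1) := by
    intro N
    rw [← psum m N, Finset.sum_div]
    apply Finset.sum_congr rfl
    intro n _
    have h1 : ((n:ℝ) + 1) ≠ 0 := by positivity
    have h2 : ((n:ℝ) + (m:ℝ) + 2) ≠ 0 := by positivity
    field_simp
    ring
  have h1 : Tendsto (fun N : ℕ => ∑ n ∈ Finset.range N,
      1 / (((n : ℝ) + 1) ^ 1 * ((n : ℝ) + (m : ℝ) + 2))) atTop
      (nhds (∑' n : ℕ, 1 / (((n : ℝ) + 1) ^ 1 * ((n : ℝ) + (m : ℝ) + 2)))) :=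
    hs.hasSum.tendsto_sum_nat
  have h2 : Tendsto (fun N : ℕ => (H N + H (m + 1) - H (N + (m + 1))) / ((m : ℝ) + 1))
      atTop (nhds (H (m + 1) / ((m : ℝ) + 1))) := by
    have := (tendsto_Hdiff (m + 1)).neg
    have h3 : Tendsto (fun N : ℕ => H N + H (m + 1) - H (N + (m + 1))) atTop
        (nhds (H (m + 1))) := by
      have h4 := this.add_const (H (m + 1))
      rw [neg_zero, zero_add] at h4
      convert h4 using 2 with N
      ring
    simpa using h3.div_const ((m : ℝ) + 1)
  have := tendsto_nhds_unique (by simpa only [hpartial] using h1) h2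
  exact this

lemma key (m : ℕ) : ∀ p : ℕ, 1 ≤ p →
    ∑' n : ℕ, 1 / (((n : ℝ) + 1) ^ p * ((n : ℝ) + (m : ℝ) + 2))
      = (∑ j ∈ Finset.Icc 2 p, (-1 : ℝ) ^ (p - j) * zr j / ((m : ℝ) + 1) ^ (p + 1 - j))
        + (-1 : ℝ) ^ (p - 1) * H (m + 1) / ((m : ℝ) + 1) ^ p := by
  intro p
  induction p with
  | zero => omega
  | succ p ih =>
    intro _
    rcases Nat.eq_or_lt_of_le (Nat.one_le_iff_ne_zero.mpr (Nat.succ_ne_zero p)) with h | h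
    · -- p + 1 = 1
      have hp0 : p = 0 := by omega
      subst hp0
      rw [show (0:ℕ)+1 = 1 from rfl, base_tsum m, Finset.Icc_eq_empty (by omega)]
      norm_num
    · have hp1 : 1 ≤ p := by omega
      have hM : ((m : ℝ) + 1) ≠ 0 := by positivity
      have hident : ∀ n : ℕ,
          1 / (((n : ℝ) + 1) ^ (p + 1) * ((n : ℝ) + (m : ℝ) + 2))
            = (1 / ((n : ℝ) + 1) ^ (p + 1)
                - 1 / (((n : ℝ) + 1) ^ p * ((n : ℝ) + (m : ℝ) + 2))) / ((m : ℝ) + 1) := by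
        intro n
        have h1 : ((n:ℝ) + 1) ≠ 0 := by positivity
        have h2 : ((n:ℝ) + (m:ℝ) + 2) ≠ 0 := by positivity
        have h3 : ((n:ℝ)+1)^p ≠ 0 := pow_ne_zero _ h1
        field_simp
        ring
      have hsz := summable_zr (p + 1) (by omega)
      have hsf := summable_f m p hp1
      calc ∑' n : ℕ, 1 / (((n : ℝ) + 1) ^ (p + 1) * ((n : ℝ) + (m : ℝ) + 2))
          = ∑' n : ℕ, (1 / ((n : ℝ) + 1) ^ (p + 1)
              - 1 / (((n : ℝ) + 1) ^ p * ((n : ℝ) + (m : ℝ) + 2))) / ((m : ℝ) + 1) := by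
            exact tsum_congr hident
        _ = (zr (p+1) - ∑' n : ℕ, 1 / (((n : ℝ) + 1) ^ p * ((n : ℝ) + (m : ℝ) + 2)))
              / ((m : ℝ) + 1) := by
            rw [tsum_div_const, Summable.tsum_sub hsz hsf, zr]
        _ = _ := by
            rw [ih hp1]
            have hsplit : Finset.Icc 2 (p + 1) = insert (p+1) (Finset.Icc 2 p) :=
              (Finset.insert_Icc_right_eq_Icc_add_one (by omega)).symm
            rw [hsplit, Finset.sum_insert (by simp)]
            have hterm1 : (-1 : ℝ) ^ (p + 1 - (p+1)) * zr (p+1) / ((m : ℝ) + 1) ^ (p + 1 + 1 - (p+1))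
                = zr (p+1) / ((m:ℝ)+1) := by norm_num
            rw [hterm1]
            have hsum : ∑ j ∈ Finset.Icc 2 p,
                (-1 : ℝ) ^ (p + 1 - j) * zr j / ((m : ℝ) + 1) ^ (p + 1 + 1 - j)
                = ∑ j ∈ Finset.Icc 2 p,
                  (-((-1 : ℝ) ^ (p - j) * zr j / ((m : ℝ) + 1) ^ (p + 1 - j))) / ((m:ℝ)+1) := by
              apply Finset.sum_congr rfl
              intro j hj
              have hjp : j ≤ p := (Finset.mem_Icc.mp hj).2
              obtain ⟨k, hk⟩ : ∃ k, p = j + k := ⟨p - j, by omega⟩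
              subst hk
              have e1 : j + k + 1 - j = k + 1 := by omega
              have e2 : j + k - j = k := by omega
              have e3 : j + k + 1 + 1 - j = k + 2 := by omega
              rw [e1, e2, e3]
              rw [pow_succ, pow_succ, pow_succ]
              field_simp
              try ring
            rw [hsum, ← Finset.sum_div, Finset.sum_neg_distrib]
            set S := ∑ j ∈ Finset.Icc 2 p, (-1:ℝ)^(p-j) * zr j / ((m:ℝ)+1)^(p+1-j) with hS
            obtain ⟨q, rfl⟩ : ∃ q, p = q + 1 := ⟨p - 1, by omega⟩
            rw [show q + 1 + 1 - 1 = q + 1 by omega, show q + 1 - 1 = q by omega]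
            rw [pow_succ ((-1:ℝ)) q, pow_succ ((m:ℝ)+1) (q+1)]
            field_simp
            ring

theorem stmt10 (p m : ℕ) (hp : 1 ≤ p) :
    (∫ x in (0:ℝ)..1, x ^ m * Li p x) =
      (∑ j ∈ Finset.Icc 2 p, (-1 : ℝ) ^ (p - j) * zr j / ((m : ℝ) + 1) ^ (p + 1 - j))
      + (-1 : ℝ) ^ (p - 1) * H (m + 1) / ((m : ℝ) + 1) ^ p := by
  have key' := key m p hp
  rw [← key']
  -- reduce to set integral over Ioc 0 1
  set F : ℕ → ℝ → ℝ := fun n x => x ^ m * (x ^ (n + 1) / ((n : ℝ) + 1) ^ p) with hF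
  have hLi : ∀ x : ℝ, x ^ m * Li p x = ∑' n : ℕ, F n x := by
    intro x
    rw [Li, ← tsum_mul_left]
  have hint : ∀ n : ℕ, IntegrableOn (F n) (Set.Ioc (0:ℝ) 1) volume := by
    intro n
    apply Continuous.integrableOn_Ioc
    continuity
  have hval : ∀ n : ℕ, ∫ x in Set.Ioc (0:ℝ) 1, F n x
      = 1 / (((n:ℝ)+1) ^ p * ((n:ℝ) + (m:ℝ) + 2)) := by
    intro n
    rw [← intervalIntegral.integral_of_le (by norm_num : (0:ℝ) ≤ 1)]
    have : ∀ x : ℝ, F n x = (1 / ((n : ℝ) + 1) ^ p) * x ^ (m + n + 1) := by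
      intro x; simp only [hF]; field_simp; ring
    simp only [this]
    rw [intervalIntegral.integral_const_mul, integral_pow]
    have h1 : ((m + n + 1 : ℕ) : ℝ) + 1 = (n:ℝ) + (m:ℝ) + 2 := by push_cast; ring
    rw [h1]
    rw [one_div, one_div, mul_inv]
    ring
  have hnorm : ∀ n : ℕ, ∫ x in Set.Ioc (0:ℝ) 1, ‖F n x‖
      = 1 / (((n:ℝ)+1) ^ p * ((n:ℝ) + (m:ℝ) + 2)) := by
    intro n
    rw [← hval n]
    apply setIntegral_congr_fun measurableSet_Ioc
    intro x hx
    have hx0 : 0 ≤ x := le_of_lt hx.1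
    exact Real.norm_of_nonneg (by positivity)
  have hswap := MeasureTheory.integral_tsum_of_summable_integral_norm
    (F := F) (μ := volume.restrict (Set.Ioc (0:ℝ) 1))
    (fun n => hint n) (by
      simp only [hnorm]
      exact summable_f m p hp)
  rw [intervalIntegral.integral_of_le (by norm_num : (0:ℝ) ≤ 1)]
  rw [show (fun x => x ^ m * Li p x) = fun x => ∑' n, F n x from funext hLi]
  rw [← hswap]
  exact tsum_congr fun n => hval n
end

section
/- Let m ≥ 0 be an integer and let x be a real number with 0 < x < 1. Then ∫₀ˣ log^m(t)·(t/(1−t)) dt = x·Σ_{j=0}^{m} (m+1−j)_j·(−1)^{j+1}·log^{m−j}(x) − log(1−x)·log^m(x) + m·Σ_{j=2}^{m+1} (−1)^{j−1}·C(m−1,j−2)·(j−2)!·Li_j(x)·log^{m+1−j}(x), where C(m−1,j−2) is a binomial coefficient. (Note Li_0(t) = t/(1−t), so the left side is ∫₀ˣ log^m(t)·Li_0(t) dt.) -/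
/-- Pochhammer symbol `(t)_k = t(t+1)⋯(t+k-1)`. -/
noncomputable def poch (t : ℝ) (k : ℕ) : ℝ := ∏ i ∈ Finset.range k, (t + i)

open Real Filter Set MeasureTheory intervalIntegral

lemma tendsto_pow_log (p q : ℕ) :
    Tendsto (fun t : ℝ => t ^ (p + 1) * Real.log t ^ q) (nhdsWithin 0 (Set.Ioi 0)) (nhds 0) := by
  rcases Nat.eq_zero_or_pos q with hq | hq
  · subst hq
    have : Tendsto (fun t : ℝ => t ^ (p+1)) (nhdsWithin 0 (Set.Ioi 0)) (nhds 0) :=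
      ((continuous_pow (p+1)).tendsto' 0 0 (by simp)).mono_left nhdsWithin_le_nhds
    simpa using this
  · have hr : (0:ℝ) < (p+1 : ℝ) / q := by positivity
    have h := (tendsto_log_mul_rpow_nhdsGT_zero hr).pow q
    rw [zero_pow hq.ne'] at h
    refine h.congr' ?_
    filter_upwards [self_mem_nhdsWithin] with t ht
    have ht0 : (0:ℝ) < t := ht
    rw [mul_pow, ← Real.rpow_natCast (t ^ ((p+1:ℝ)/q)) q, ← Real.rpow_mul ht0.le,
      div_mul_cancel₀ _ (by exact_mod_cast hq.ne' : (q:ℝ) ≠ 0),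
      show ((p:ℝ)+1) = ((p+1:ℕ):ℝ) by push_cast; ring, Real.rpow_natCast]
    ring

lemma contOn_pow_log (p q : ℕ) {x : ℝ} (hx : 0 ≤ x) :
    ContinuousOn (fun t : ℝ => t ^ (p + 1) * Real.log t ^ q) (Set.Icc 0 x) := by
  intro t ht
  rcases eq_or_lt_of_le ht.1 with h0 | h0
  · have h1 : ContinuousWithinAt (fun t : ℝ => t ^ (p + 1) * Real.log t ^ q) (Set.Ioi 0) 0 := by
      unfold ContinuousWithinAt
      simpa using tendsto_pow_log p q
    rw [continuousWithinAt_Ioi_iff_Ici] at h1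
    rw [← h0]
    exact h1.mono Set.Icc_subset_Ici_self
  · exact ((continuous_pow (p+1)).continuousAt.mul
      ((Real.continuousAt_log h0.ne').pow q)).continuousWithinAt

lemma intInt_pow_log (p q : ℕ) {x : ℝ} (hx : 0 ≤ x) :
    IntervalIntegrable (fun t : ℝ => t ^ (p + 1) * Real.log t ^ q) MeasureTheory.volume 0 x := by
  have h := contOn_pow_log p q hx
  rw [show Set.Icc (0:ℝ) x = Set.uIcc 0 x from (Set.uIcc_of_le hx).symm] at h
  exact h.intervalIntegrable

lemma int_rec (a q : ℕ) {x : ℝ} (hx : 0 ≤ x) :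
    ∫ t in (0:ℝ)..x, t ^ (a+1) * Real.log t ^ (q+1)
      = x ^ (a+2) * Real.log x ^ (q+1) / (a+2) -
        ((q+1:ℝ)/(a+2)) * ∫ t in (0:ℝ)..x, t ^ (a+1) * Real.log t ^ q := by
  have h2 : ((a:ℝ)+2) ≠ 0 := by positivity
  have hG : ∀ t ∈ Set.Ioo (0:ℝ) x, HasDerivAt (fun t : ℝ => t ^ (a+2) * Real.log t ^ (q+1) / (a+2))
      (t ^ (a+1) * Real.log t ^ (q+1) + ((q+1:ℝ)/(a+2)) * (t ^ (a+1) * Real.log t ^ q)) t := by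
    intro t ht
    have h1 : HasDerivAt (fun t : ℝ => t ^ (a+2)) ((a+2) * t ^ (a+1)) t := by
      simpa using hasDerivAt_pow (a+2) t
    have hlog : HasDerivAt (fun t : ℝ => Real.log t ^ (q+1))
        ((q+1) * Real.log t ^ q * t⁻¹) t := by
      simpa using (Real.hasDerivAt_log ht.1.ne').fun_pow (q+1)
    have := (h1.mul hlog).div_const ((a:ℝ)+2)
    refine this.congr_deriv ?_
    field_simp [ht.1.ne']
    ring
  have hint : IntervalIntegrable (fun t : ℝ => t ^ (a+1) * Real.log t ^ (q+1)
      + ((q+1:ℝ)/(a+2)) * (t ^ (a+1) * Real.log t ^ q)) MeasureTheory.volume 0 x :=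
    (intInt_pow_log a (q+1) hx).add ((intInt_pow_log a q hx).const_mul _)
  have hcont : ContinuousOn (fun t : ℝ => t ^ (a+2) * Real.log t ^ (q+1) / (a+2)) (Set.Icc 0 x) := by
    have h := (contOn_pow_log (a+1) (q+1) hx).div_const ((a:ℝ)+2)
    simpa only [show a+1+1 = a+2 from rfl] using h
  have := intervalIntegral.integral_eq_sub_of_hasDerivAt_of_le hx hcont hG hint
  rw [intervalIntegral.integral_add (intInt_pow_log a (q+1) hx)
    ((intInt_pow_log a q hx).const_mul _), intervalIntegral.integral_const_mul,
    show (0:ℝ)^(a+2) = 0 from zero_pow (by omega)] at this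
  rw [eq_sub_iff_add_eq]
  rw [this]
  ring

lemma intpow (m a : ℕ) {x : ℝ} (hx : 0 ≤ x) :
    ∫ t in (0:ℝ)..x, t ^ (a+1) * Real.log t ^ m
      = ∑ k ∈ Finset.range (m+1), (-1:ℝ)^k * (m.descFactorial k : ℝ)
          * x ^ (a+2) * Real.log x ^ (m-k) / ((a:ℝ)+2)^(k+1) := by
  have h2 : ((a:ℝ)+2) ≠ 0 := by positivity
  induction m with
  | zero =>
      rw [show Finset.range (0+1) = {0} from rfl, Finset.sum_singleton]
      simp only [pow_zero, mul_one, Nat.descFactorial_zero,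
        Nat.cast_one, Nat.zero_sub, one_mul, pow_one]
      rw [integral_pow]
      rw [show (0:ℝ)^(a+1+1) = 0 from zero_pow (by omega)]
      push_cast
      ring
  | succ q ih =>
      have key : ∀ k ∈ Finset.range (q+1),
          (-1:ℝ)^(k+1) * ((q+1).descFactorial (k+1) : ℝ) * x^(a+2)
            * Real.log x ^ (q+1-(k+1)) / ((a:ℝ)+2)^(k+1+1)
          = (-((q+1:ℝ)/((a:ℝ)+2))) * ((-1:ℝ)^k * (q.descFactorial k : ℝ) * x^(a+2)
            * Real.log x ^ (q-k) / ((a:ℝ)+2)^(k+1)) := by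
        intro k _
        rw [Nat.succ_sub_succ, Nat.succ_descFactorial_succ]
        push_cast
        field_simp
        ring
      rw [int_rec a q hx, ih]
      conv_rhs => rw [Finset.sum_range_succ']
      rw [Finset.sum_congr rfl key, ← Finset.mul_sum]
      simp only [Nat.descFactorial_zero, Nat.cast_one, pow_zero, Nat.sub_zero, one_mul, mul_one,
        pow_one]
      ring

lemma summable_Li {x : ℝ} (h0 : 0 ≤ x) (h1 : x < 1) (p : ℕ) :
    Summable (fun n : ℕ => x ^ (n + 1) / ((n : ℝ) + 1) ^ p) := by
  refine Summable.of_nonneg_of_le (fun n => by positivity) (fun n => ?_)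
    ((summable_geometric_of_lt_one h0 h1).mul_right x)
  calc x ^ (n + 1) / ((n : ℝ) + 1) ^ p ≤ x ^ (n + 1) / 1 := by
        apply div_le_div_of_nonneg_left ?_ ?_ ?_ |>.trans_eq rfl
        · positivity
        · norm_num
        · exact one_le_pow₀ (by push_cast; linarith)
    _ = x ^ n * x := by rw [div_one, pow_succ]

lemma hasSum_Li {x : ℝ} (h0 : 0 ≤ x) (h1 : x < 1) (p : ℕ) :
    HasSum (fun n : ℕ => x ^ (n + 1) / ((n : ℝ) + 1) ^ p) (Li p x) :=
  (summable_Li h0 h1 p).hasSum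

lemma hasSum_Li_shift {x : ℝ} (h0 : 0 ≤ x) (h1 : x < 1) (p : ℕ) :
    HasSum (fun n : ℕ => x ^ (n + 2) / ((n : ℝ) + 2) ^ p) (Li p x - x) := by
  have h2 := (hasSum_nat_add_iff' (f := fun n : ℕ => x ^ (n + 1) / ((n : ℝ) + 1) ^ p) 1).mpr
    (hasSum_Li h0 h1 p)
  simp only [Finset.sum_range_one, Nat.cast_zero, zero_add, pow_one, one_pow, div_one] at h2
  convert h2 using 2 with n
  · rfl
  push_cast
  ring_nf

lemma Li_one_eq {x : ℝ} (h : |x| < 1) : Li 1 x = -Real.log (1 - x) := by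
  have := (Real.hasSum_pow_div_log_of_abs_lt_one h).tsum_eq
  rw [Li, ← this]
  exact tsum_congr fun n => by rw [pow_one]

lemma hasSum_main (m : ℕ) {x : ℝ} (hx0 : 0 < x) (hx1 : x < 1) :
    HasSum (fun n : ℕ => ∑ k ∈ Finset.range (m+1), (-1:ℝ)^k * (m.descFactorial k : ℝ)
        * x ^ (n+2) * Real.log x ^ (m-k) / ((n:ℝ)+2)^(k+1))
      (∫ t in (0:ℝ)..x, Real.log t ^ m * (t / (1 - t))) := by
  set F : ℕ → ℝ → ℝ := fun n t => t ^ (n+1) * Real.log t ^ m with hF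
  have hF_int : ∀ n : ℕ, MeasureTheory.IntegrableOn (F n) (Set.Ioc 0 x) MeasureTheory.volume :=
    fun n => ((contOn_pow_log n m hx0.le).integrableOn_Icc).mono_set Set.Ioc_subset_Icc_self
  obtain ⟨C, hC⟩ := (isCompact_Icc (a := (0:ℝ)) (b := x)).exists_bound_of_continuousOn
    (contOn_pow_log 0 m hx0.le)
  have hF_sum : Summable fun n : ℕ => ∫ t in Set.Ioc (0:ℝ) x, ‖F n t‖ := by
    refine Summable.of_nonneg_of_le
      (fun n => MeasureTheory.integral_nonneg (fun t => norm_nonneg _))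
      (fun n => ?_) (((summable_geometric_of_lt_one hx0.le hx1).mul_right (C * x)))
    have hb : ∀ t ∈ Set.Ioc (0:ℝ) x, ‖F n t‖ ≤ x ^ n * C := by
      intro t ht
      have ht0 : 0 < t := ht.1
      have : F n t = t ^ n * (t ^ (0+1) * Real.log t ^ m) := by
        simp only [hF, zero_add, pow_one, pow_succ]
        ring
      rw [this, norm_mul, norm_pow, Real.norm_of_nonneg ht0.le]
      exact mul_le_mul (pow_le_pow_left₀ ht0.le ht.2 n)
        (hC t ⟨ht0.le, ht.2⟩) (norm_nonneg _) (by positivity)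
    calc ∫ t in Set.Ioc (0:ℝ) x, ‖F n t‖ ≤ ∫ _t in Set.Ioc (0:ℝ) x, x ^ n * C :=
          MeasureTheory.setIntegral_mono_on (hF_int n).norm
            ((MeasureTheory.integrableOn_const_iff (by finiteness)).mpr (Or.inr (by
              rw [Real.volume_Ioc]; exact ENNReal.ofReal_lt_top))) measurableSet_Ioc hb
      _ = x ^ n * (C * x) := by
          rw [MeasureTheory.setIntegral_const, MeasureTheory.measureReal_def, Real.volume_Ioc, smul_eq_mul]
          rw [ENNReal.toReal_ofReal (by linarith)]
          ring
  have main := MeasureTheory.hasSum_integral_of_summable_integral_norm hF_int hF_sum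
  have heq1 : ∀ n : ℕ, (∫ t in Set.Ioc (0:ℝ) x, F n t)
      = ∑ k ∈ Finset.range (m+1), (-1:ℝ)^k * (m.descFactorial k : ℝ)
          * x ^ (n+2) * Real.log x ^ (m-k) / ((n:ℝ)+2)^(k+1) := by
    intro n
    rw [← intervalIntegral.integral_of_le hx0.le]
    exact intpow m n hx0.le
  have heq2 : (∫ t in Set.Ioc (0:ℝ) x, ∑' n : ℕ, F n t)
      = ∫ t in (0:ℝ)..x, Real.log t ^ m * (t / (1 - t)) := by
    rw [intervalIntegral.integral_of_le hx0.le]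
    refine MeasureTheory.setIntegral_congr_fun measurableSet_Ioc (fun t ht => ?_)
    have ht1 : t < 1 := lt_of_le_of_lt ht.2 hx1
    have : ∑' n : ℕ, F n t = (∑' n : ℕ, t ^ (n+1)) * Real.log t ^ m := by
      rw [← tsum_mul_right]
    rw [this]
    have : ∑' n : ℕ, t ^ (n+1) = t * (1-t)⁻¹ := by
      calc ∑' n : ℕ, t ^ (n+1) = ∑' n : ℕ, t * t ^ n := by
            exact tsum_congr fun n => by rw [pow_succ']
        _ = t * ∑' n : ℕ, t ^ n := tsum_mul_left
        _ = t * (1-t)⁻¹ := by rw [tsum_geometric_of_lt_one ht.1.le ht1]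
    rw [this, div_eq_mul_inv]
    ring
  simp only [heq1] at main
  rwa [heq2] at main

lemma poch_eq (m j : ℕ) (hj : j ≤ m) : poch ((m : ℝ) + 1 - j) j = (m.descFactorial j : ℝ) := by
  rw [Nat.descFactorial_eq_prod_range, Nat.cast_prod]
  rw [← Finset.prod_range_reflect (fun i => ((m - i : ℕ) : ℝ)) j]
  unfold poch
  apply Finset.prod_congr rfl
  intro i hi
  rw [Finset.mem_range] at hi
  rw [Nat.cast_sub (by omega)]
  rw [show ((j - 1 - i : ℕ) : ℝ) = (j : ℝ) - 1 - i by
    rw [show j - 1 - i = j - (1 + i) from by omega, Nat.cast_sub (by omega)]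
    push_cast; ring]
  ring

theorem stmt11 (m : ℕ) (x : ℝ) (hx0 : 0 < x) (hx1 : x < 1) :
    (∫ t in (0:ℝ)..x, (Real.log t) ^ m * (t / (1 - t))) =
      x * (∑ j ∈ Finset.range (m + 1), poch ((m : ℝ) + 1 - j) j * (-1 : ℝ) ^ (j + 1)
        * (Real.log x) ^ (m - j))
      - Real.log (1 - x) * (Real.log x) ^ m
      + (m : ℝ) * ∑ j ∈ Finset.Icc 2 (m + 1), (-1 : ℝ) ^ (j - 1)
          * ((m - 1).choose (j - 2) : ℝ) * ((j - 2).factorial : ℝ)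
          * Li j x * (Real.log x) ^ (m + 1 - j) := by
  have hxle := hx0.le
  have hks : ∀ k ∈ Finset.range (m+1), HasSum
      (fun n : ℕ => (-1:ℝ)^k * (m.descFactorial k : ℝ)
        * x ^ (n+2) * Real.log x ^ (m-k) / ((n:ℝ)+2)^(k+1))
      (((-1:ℝ)^k * (m.descFactorial k : ℝ) * Real.log x ^ (m-k)) * (Li (k+1) x - x)) := by
    intro k _
    have h := (hasSum_Li_shift hxle hx1 (k+1)).mul_left
      ((-1:ℝ)^k * (m.descFactorial k : ℝ) * Real.log x ^ (m-k))
    have hfg : (fun n : ℕ => (-1:ℝ)^k * (m.descFactorial k : ℝ)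
        * x ^ (n+2) * Real.log x ^ (m-k) / ((n:ℝ)+2)^(k+1))
        = fun n : ℕ => ((-1:ℝ)^k * (m.descFactorial k : ℝ) * Real.log x ^ (m-k))
          * (x ^ (n+2) / ((n:ℝ)+2)^(k+1)) := funext fun n => by ring
    rw [hfg]
    exact h
  have E := (hasSum_main m hx0 hx1).unique (hasSum_sum hks)
  rw [E]
  rw [Finset.sum_congr rfl (fun k _ => mul_sub ((-1:ℝ)^k * (m.descFactorial k : ℝ)
    * Real.log x ^ (m-k)) (Li (k+1) x) x), Finset.sum_sub_distrib]
  have hB : ∑ k ∈ Finset.range (m+1), ((-1:ℝ)^k * (m.descFactorial k : ℝ)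
      * Real.log x ^ (m-k)) * x
      = -(x * ∑ j ∈ Finset.range (m + 1), poch ((m : ℝ) + 1 - j) j * (-1 : ℝ) ^ (j + 1)
        * (Real.log x) ^ (m - j)) := by
    rw [Finset.mul_sum, ← Finset.sum_neg_distrib]
    apply Finset.sum_congr rfl
    intro j hj
    rw [Finset.mem_range] at hj
    rw [poch_eq m j (by omega)]
    ring
  have hA : ∑ k ∈ Finset.range (m+1), ((-1:ℝ)^k * (m.descFactorial k : ℝ)
      * Real.log x ^ (m-k)) * Li (k+1) x
      = - (Real.log (1-x) * Real.log x ^ m)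
        + (m : ℝ) * ∑ j ∈ Finset.Icc 2 (m + 1), (-1 : ℝ) ^ (j - 1)
          * ((m - 1).choose (j - 2) : ℝ) * ((j - 2).factorial : ℝ)
          * Li j x * (Real.log x) ^ (m + 1 - j) := by
    rw [Finset.sum_range_succ']
    have h0term : ((-1:ℝ)^0 * (m.descFactorial 0 : ℝ) * Real.log x ^ (m-0)) * Li (0+1) x
        = -(Real.log (1-x) * Real.log x ^ m) := by
      rw [Li_one_eq (abs_lt.mpr ⟨by linarith, hx1⟩)]
      simp
      ring
    have hrest : ∑ k ∈ Finset.range m, ((-1:ℝ)^(k+1) * (m.descFactorial (k+1) : ℝ)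
        * Real.log x ^ (m-(k+1))) * Li (k+1+1) x
        = (m : ℝ) * ∑ j ∈ Finset.Icc 2 (m + 1), (-1 : ℝ) ^ (j - 1)
          * ((m - 1).choose (j - 2) : ℝ) * ((j - 2).factorial : ℝ)
          * Li j x * (Real.log x) ^ (m + 1 - j) := by
      rw [← Finset.Ico_add_one_right_eq_Icc, Finset.sum_Ico_eq_sum_range,
        show m + 1 + 1 - 2 = m from by omega, Finset.mul_sum]
      apply Finset.sum_congr rfl
      intro i hi
      rw [Finset.mem_range] at hi
      have hd : m.descFactorial (i+1) = m * (i.factorial * (m-1).choose i) := by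
        have hm : m = (m-1)+1 := by omega
        rw [hm, Nat.succ_descFactorial_succ, Nat.descFactorial_eq_factorial_mul_choose,
          Nat.add_sub_cancel]
      rw [show 2+i-1 = i+1 from by omega, show 2+i-2 = i from by omega,
        show m+1-(2+i) = m-(i+1) from by omega, show 2+i = i+2 from by omega,
        show i+1+1 = i+2 from by omega]
      rw [hd]
      push_cast
      ring
    rw [h0term, hrest]
    ring
  rw [hA, hB]
  ring
end

section
/- Let p, q be integers with p ≥ q ≥ 1 and let m be an integer with m ≥ 0 or m = −2. Write J(m,r,s) := ∫₀¹ x^m·Li_r(x)·Li_s(x) dx. Then J(m,p,q) = Σ_{x=1}^{q−1} Σ_{i_1=0}^{p−2} ((−1)^{i_1+1}/(m+1)^{i_1+1}) ⋯ Σ_{i_{x−1}=0}^{p−i_1−⋯−i_{x−2}−2} ((−1)^{i_{x−1}+1}/(m+1)^{i_{x−1}+1}) Σ_{i_x=0}^{p−i_1−⋯−i_{x−1}−2} ((−1)^{i_x}/(m+1)^{i_x+1})·ζ(p−i_1−⋯−i_x)·ζ(q−x+1) + Σ_{x=1}^{q−1} ((−1)^{p−2+x}/(m+1)^{p−2+x})·J(m,1,q−x+1)·N_{x−1}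 + Σ_{i_1=0}^{p−2} ((−1)^{i_1+1}/(m+1)^{i_1+1}) ⋯ Σ_{i_{q−1}=0}^{p−i_1−⋯−i_{q−2}−2} ((−1)^{i_{q−1}+1}/(m+1)^{i_{q−1}+1})·J(m,p−i_1−⋯−i_{q−1},1), where N_{x−1} := Σ_{i_1=0}^{p−2} ⋯ Σ_{i_{x−1}=0}^{p−i_1−⋯−i_{x−2}−2} 1 is the number of (x−1)-tuples of nonnegative integers (i_1,…,i_{x−1}) with i_1+⋯+i_j ≤ p−2 for every j (N_0 := 1), the nested sums run over all tuples of nonnegative integers whose partial sums satisfy the indicated upper bounds, and empty sums (for x with q−x+1 indices unavailable, or when q = 1) are 0 while the length-0 nested sum is the single empty tuple. -/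
/-- `J m r s = ∫₀¹ x^m · Li_r(x) · Li_s(x) dx` (with `x^m` a `zpow`, so `m` may be `-2`). -/
noncomputable def Jint (m : ℤ) (r s : ℕ) : ℝ := ∫ x in (0:ℝ)..1, x ^ m * Li r x * Li s x

/-- `nest18 m p y s f` is the nested sum
`Σ_{i_1=0}^{p-s-2} ((-1)^{i_1+1}/(m+1)^{i_1+1}) Σ_{i_2=0}^{p-s-i_1-2} ⋯ f (s+i_1+⋯+i_y)`,
over all `y`-tuples of nonnegative integers whose partial sums satisfy the indicated bounds,
each index `i_j` contributing a factor `(-1)^{i_j+1}/(m+1)^{i_j+1}`. -/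
noncomputable def nest18 (m : ℤ) (p : ℕ) : ℕ → ℕ → (ℕ → ℝ) → ℝ
  | 0, s, f => f s
  | y + 1, s, f => ∑ i ∈ Finset.range (p - s - 1),
      ((-1 : ℝ) ^ (i + 1) / ((m : ℝ) + 1) ^ (i + 1)) * nest18 m p y (s + i) f

/-- `cnt18 p y s` is the number of `y`-tuples of nonnegative integers `(i_1, …, i_y)` with
`s + i_1 + ⋯ + i_j ≤ p - 2` for every `j`; `cnt18 p 0 s = 1` (the empty tuple). -/
def cnt18 (p : ℕ) : ℕ → ℕ → ℕ
  | 0, _ => 1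
  | y + 1, s => ∑ i ∈ Finset.range (p - s - 1), cnt18 p y (s + i)

open Finset MeasureTheory

noncomputable def sd (m : ℤ) (p q : ℕ) (ab : ℕ × ℕ) : ℝ :=
  1 / (((ab.1:ℝ)+1)^p * ((ab.2:ℝ)+1)^q * ((m:ℝ) + ab.1 + ab.2 + 3))

variable {m : ℤ}

lemma M_ne (hm : 0 ≤ m ∨ m = -2) : ((m:ℝ) + 1) ≠ 0 := by
  rcases hm with h | rfl
  · have : (0:ℝ) ≤ m := by exact_mod_cast h
    linarith
  · norm_num

lemma D_pos (hm : 0 ≤ m ∨ m = -2) (a b : ℕ) : 0 < (m:ℝ) + a + b + 3 := by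
  have ha : (0:ℝ) ≤ a := a.cast_nonneg
  have hb : (0:ℝ) ≤ b := b.cast_nonneg
  rcases hm with h | rfl
  · have : (0:ℝ) ≤ m := by exact_mod_cast h
    linarith
  · push_cast; linarith

lemma summable_g : Summable (fun n : ℕ => 1 / (((n:ℝ)+1) * Real.sqrt ((n:ℝ)+1))) := by
  have h := Real.summable_one_div_nat_rpow.mpr (by norm_num : (1:ℝ) < 3/2)
  have h2 := (summable_nat_add_iff 1).mpr h
  refine h2.congr fun n => ?_
  have hx : (0:ℝ) < (n:ℝ) + 1 := by positivity
  push_cast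
  rw [show (3/2:ℝ) = 1 + 1/2 by norm_num, Real.rpow_add hx, Real.rpow_one,
    ← Real.sqrt_eq_rpow]

lemma summable_sd (hm : 0 ≤ m ∨ m = -2) {p q : ℕ} (hp : 1 ≤ p) (hq : 1 ≤ q) :
    Summable (sd m p q) := by
  have hg : Summable (fun n : ℕ => ‖1 / (((n:ℝ)+1) * Real.sqrt ((n:ℝ)+1))‖) := by
    refine summable_g.congr fun n => ?_
    rw [Real.norm_of_nonneg (by positivity)]
  have hmul := summable_mul_of_summable_norm (f := fun n : ℕ => 1 / (((n:ℝ)+1) * Real.sqrt ((n:ℝ)+1)))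
    (g := fun n : ℕ => 1 / (((n:ℝ)+1) * Real.sqrt ((n:ℝ)+1))) hg hg
  refine hmul.of_nonneg_of_le (fun ab => ?_) (fun ab => ?_)
  · have := D_pos hm ab.1 ab.2
    unfold sd; positivity
  · obtain ⟨a, b⟩ := ab
    have hA : (1:ℝ) ≤ (a:ℝ)+1 := by have := a.cast_nonneg (α := ℝ); linarith
    have hB : (1:ℝ) ≤ (b:ℝ)+1 := by have := b.cast_nonneg (α := ℝ); linarith
    have hD : ((a:ℝ)+1) + ((b:ℝ)+1) - 1 ≤ (m:ℝ) + a + b + 3 := by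
      rcases hm with h | rfl
      · have : (0:ℝ) ≤ m := by exact_mod_cast h
        linarith
      · push_cast; linarith
    have hDpos := D_pos hm a b
    set A := (a:ℝ)+1 with hAdef
    set B := (b:ℝ)+1 with hBdef
    have hsq : Real.sqrt A * Real.sqrt B ≤ A + B - 1 := by
      rw [← Real.sqrt_mul (by linarith)]
      have h1 : A * B ≤ (A + B - 1)^2 := by nlinarith
      calc Real.sqrt (A * B) ≤ Real.sqrt ((A+B-1)^2) := Real.sqrt_le_sqrt h1
        _ = A + B - 1 := Real.sqrt_sq (by linarith)
    have hApow : A ≤ A ^ p := le_self_pow₀ (by linarith) (by omega)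
    have hBpow : B ≤ B ^ q := le_self_pow₀ (by linarith) (by omega)
    have hsA : 0 < Real.sqrt A := Real.sqrt_pos.mpr (by linarith)
    have hsB : 0 < Real.sqrt B := Real.sqrt_pos.mpr (by linarith)
    show sd m p q (a, b) ≤ 1 / (A * Real.sqrt A) * (1 / (B * Real.sqrt B))
    rw [div_mul_div_comm, one_mul]
    unfold sd
    apply one_div_le_one_div_of_le (by positivity)
    calc A * Real.sqrt A * (B * Real.sqrt B)
        = (A * B) * (Real.sqrt A * Real.sqrt B) := by ring
      _ ≤ (A * B) * ((m:ℝ) + a + b + 3) := by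
          apply mul_le_mul_of_nonneg_left (le_trans hsq hD) (by positivity)
      _ ≤ (A^p * B^q) * ((m:ℝ) + a + b + 3) := by
          apply mul_le_mul_of_nonneg_right _ (le_of_lt hDpos)
          exact mul_le_mul hApow hBpow (by linarith) (by positivity)
      _ = A^p * B^q * ((m:ℝ) + (a:ℝ) + b + 3) := by ring

lemma summable_li_norm {p : ℕ} {x : ℝ} (hx : |x| < 1) :
    Summable (fun n : ℕ => ‖x ^ (n+1) / ((n:ℝ)+1) ^ p‖) := by
  have hgeo : Summable (fun n : ℕ => |x| ^ (n+1)) := by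
    have := (summable_geometric_of_lt_one (abs_nonneg x) hx).mul_left |x|
    refine this.congr fun n => ?_
    rw [pow_succ]; ring
  refine hgeo.of_nonneg_of_le (fun n => norm_nonneg _) fun n => ?_
  rw [norm_div, norm_pow, norm_pow]
  have h1 : (1:ℝ) ≤ ‖(n:ℝ)+1‖ := by
    rw [Real.norm_of_nonneg (by positivity)]
    have := n.cast_nonneg (α := ℝ); linarith
  calc ‖x‖^(n+1) / ‖(n:ℝ)+1‖^p ≤ ‖x‖^(n+1) := by
        apply div_le_self (by positivity) (one_le_pow₀ h1)
    _ = |x|^(n+1) := by rw [Real.norm_eq_abs]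

lemma li_mul_li (p q : ℕ) {x : ℝ} (hx : |x| < 1) :
    Li p x * Li q x = ∑' ab : ℕ × ℕ,
      (x ^ (ab.1+1) / ((ab.1:ℝ)+1) ^ p) * (x ^ (ab.2+1) / ((ab.2:ℝ)+1) ^ q) :=
  tsum_mul_tsum_of_summable_norm (summable_li_norm hx) (summable_li_norm hx)

lemma Jint_eq (hm : 0 ≤ m ∨ m = -2) {p q : ℕ} (hp : 1 ≤ p) (hq : 1 ≤ q) :
    Jint m p q = ∑' ab : ℕ × ℕ, sd m p q ab := by
  have hE : ∀ ab : ℕ × ℕ, (((m+2).toNat + ab.1 + ab.2 : ℕ) : ℤ) = m + ab.1 + ab.2 + 2 := by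
    intro ab; rcases hm with h|rfl <;> push_cast <;> omega
  set F : ℕ × ℕ → ℝ → ℝ := fun ab x =>
    x ^ ((m+2).toNat + ab.1 + ab.2) / (((ab.1:ℝ)+1)^p * ((ab.2:ℝ)+1)^q) with hF
  have hint : ∀ ab, IntegrableOn (F ab) (Set.Ioo (0:ℝ) 1) := by
    intro ab
    exact (((continuous_pow _).div_const _).integrableOn_Icc).mono_set Set.Ioo_subset_Icc_self
  have hval : ∀ ab : ℕ × ℕ, ∫ x in Set.Ioo (0:ℝ) 1, F ab x = sd m p q ab := by
    intro ab
    have h1 : ∫ x in Set.Ioo (0:ℝ) 1, F ab x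
        = ∫ x in (0:ℝ)..1, x ^ ((m+2).toNat + ab.1 + ab.2)
            / (((ab.1:ℝ)+1)^p * ((ab.2:ℝ)+1)^q) := by
      rw [intervalIntegral.integral_of_le zero_le_one, integral_Ioc_eq_integral_Ioo]
    rw [h1, intervalIntegral.integral_div, integral_pow]
    have h2 := congrArg (Int.cast : ℤ → ℝ) (hE ab)
    push_cast at h2
    rw [sd]
    rw [one_pow, zero_pow (Nat.succ_ne_zero _), sub_zero]
    have hN : (0:ℝ) < (((m+2).toNat + ab.1 + ab.2 : ℕ):ℝ) + 1 := by positivity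
    have hC : (0:ℝ) < ((ab.1:ℝ)+1)^p * ((ab.2:ℝ)+1)^q := by positivity
    have h3 : (m:ℝ) + ab.1 + ab.2 + 3 = (((m+2).toNat + ab.1 + ab.2 : ℕ):ℝ) + 1 := by
      push_cast; linarith [h2]
    rw [h3]
    field_simp
  have hnorm : ∀ ab : ℕ × ℕ, ∫ x in Set.Ioo (0:ℝ) 1, ‖F ab x‖ = sd m p q ab := by
    intro ab
    rw [← hval ab]
    apply setIntegral_congr_fun measurableSet_Ioo
    intro x hx
    have hx0 := hx.1.le
    exact Real.norm_of_nonneg (by rw [hF]; positivity)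
  have key : ∑' ab, ∫ x in Set.Ioo (0:ℝ) 1, F ab x = ∫ x in Set.Ioo (0:ℝ) 1, ∑' ab, F ab x :=
    integral_tsum_of_summable_integral_norm hint
      ((summable_sd hm hp hq).congr fun ab => (hnorm ab).symm)
  have hpt : ∀ x ∈ Set.Ioo (0:ℝ) 1, x ^ m * Li p x * Li q x = ∑' ab, F ab x := by
    intro x hx
    obtain ⟨hx0, hx1⟩ := hx
    have hxa : |x| < 1 := abs_lt.mpr ⟨by linarith, hx1⟩
    rw [mul_assoc, li_mul_li p q hxa, ← tsum_mul_left]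
    apply tsum_congr
    intro ab
    have hx0' : x ≠ 0 := ne_of_gt hx0
    simp only [hF]
    rw [div_mul_div_comm, ← pow_add, ← mul_div_assoc]
    congr 1
    rw [← zpow_natCast x (ab.1+1+(ab.2+1)), ← zpow_add₀ hx0',
      ← zpow_natCast x ((m+2).toNat + ab.1 + ab.2)]
    congr 1
    rw [hE ab]; push_cast; ring
  calc Jint m p q = ∫ x in Set.Ioo (0:ℝ) 1, x ^ m * Li p x * Li q x := by
        rw [Jint, intervalIntegral.integral_of_le zero_le_one, integral_Ioc_eq_integral_Ioo]
    _ = ∫ x in Set.Ioo (0:ℝ) 1, ∑' ab, F ab x := setIntegral_congr_fun measurableSet_Ioo hpt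
    _ = ∑' ab, ∫ x in Set.Ioo (0:ℝ) 1, F ab x := key.symm
    _ = ∑' ab, sd m p q ab := tsum_congr hval

lemma summable_zrt {s : ℕ} (hs : 2 ≤ s) : Summable (fun n : ℕ => ‖1 / ((n:ℝ)+1) ^ s‖) := by
  have h := Real.summable_one_div_nat_pow.mpr hs
  have h2 := (summable_nat_add_iff 1).mpr h
  refine h2.congr fun n => ?_
  rw [Real.norm_of_nonneg (by positivity)]
  push_cast
  ring

lemma zr_mul_zr {p q : ℕ} (hp : 2 ≤ p) (hq : 2 ≤ q) :
    zr p * zr q = ∑' ab : ℕ × ℕ, (1 / ((ab.1:ℝ)+1) ^ p) * (1 / ((ab.2:ℝ)+1) ^ q) :=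
  tsum_mul_tsum_of_summable_norm (summable_zrt hp) (summable_zrt hq)

lemma rec18 (hm : 0 ≤ m ∨ m = -2) {p q : ℕ} (hp : 2 ≤ p) (hq : 2 ≤ q) :
    ((m:ℝ)+1) * Jint m p q + Jint m (p-1) q + Jint m p (q-1) = zr p * zr q := by
  obtain ⟨p', rfl⟩ : ∃ p', p = p'+2 := ⟨p-2, by omega⟩
  obtain ⟨q', rfl⟩ : ∃ q', q = q'+2 := ⟨q-2, by omega⟩
  have e1 : p'+2-1 = p'+1 := rfl
  have e2 : q'+2-1 = q'+1 := rfl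
  rw [e1, e2, Jint_eq hm (by omega) (by omega), Jint_eq hm (by omega) (by omega),
    Jint_eq hm (by omega) (by omega), zr_mul_zr (by omega) (by omega), ← tsum_mul_left,
    ← Summable.tsum_add ((summable_sd hm (p := p'+2) (q := q'+2) (by omega) (by omega)).mul_left
        ((m:ℝ)+1)) (summable_sd hm (p := p'+1) (q := q'+2) (by omega) (by omega)),
    ← Summable.tsum_add (((summable_sd hm (p := p'+2) (q := q'+2) (by omega) (by omega)).mul_left
        ((m:ℝ)+1)).add (summable_sd hm (p := p'+1) (q := q'+2) (by omega) (by omega)))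
      (summable_sd hm (p := p'+2) (q := q'+1) (by omega) (by omega))]
  apply tsum_congr
  rintro ⟨a, b⟩
  have hA : ((a:ℝ)+1) ≠ 0 := by positivity
  have hB : ((b:ℝ)+1) ≠ 0 := by positivity
  have hD : ((m:ℝ) + a + b + 3) ≠ 0 := ne_of_gt (D_pos hm a b)
  simp only [sd]
  field_simp
  ring

lemma unroll (hm : 0 ≤ m ∨ m = -2) {p q : ℕ} (hp : 2 ≤ p) (hq : 2 ≤ q) :
    Jint m p q =
      (∑ i ∈ range (p-1), (-1:ℝ)^i / ((m:ℝ)+1)^(i+1) * (zr (p-i) * zr q))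
      + (∑ i ∈ range (p-1), (-1:ℝ)^(i+1) / ((m:ℝ)+1)^(i+1) * Jint m (p-i) (q-1))
      + (-1:ℝ)^(p-1) / ((m:ℝ)+1)^(p-1) * Jint m 1 q := by
  have hM := M_ne hm
  induction p, hp using Nat.le_induction with
  | base =>
    have h := rec18 hm (le_refl 2) hq
    norm_num at h ⊢
    have h2 : Jint m 2 q = ((m:ℝ)+1)⁻¹ * (zr 2 * zr q - Jint m 1 q - Jint m 2 (q-1)) := by
      field_simp
      linarith
    rw [h2]
    ring
  | succ p hp ih =>
    obtain ⟨n, rfl⟩ : ∃ n, p = n+1 := ⟨p-1, by omega⟩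
    have h := rec18 hm (show 2 ≤ n+1+1 by omega) hq
    simp only [Nat.add_sub_cancel] at h ih ⊢
    have h2 : Jint m (n+1+1) q = ((m:ℝ)+1)⁻¹ *
        (zr (n+1+1) * zr q - Jint m (n+1) q - Jint m (n+1+1) (q-1)) := by
      field_simp
      linarith
    have hs1 : ∑ i ∈ range (n+1), (-1:ℝ)^i / ((m:ℝ)+1)^(i+1) * (zr (n+1+1-i) * zr q)
        = -((m:ℝ)+1)⁻¹ * (∑ i ∈ range n, (-1:ℝ)^i / ((m:ℝ)+1)^(i+1) * (zr (n+1-i) * zr q))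
          + ((m:ℝ)+1)⁻¹ * (zr (n+1+1) * zr q) := by
      rw [Finset.sum_range_succ' _ n]
      have hc : ∀ i ∈ range n, (-1:ℝ)^(i+1) / ((m:ℝ)+1)^(i+1+1) * (zr (n+1+1-(i+1)) * zr q)
          = (-((m:ℝ)+1)⁻¹) * ((-1:ℝ)^i / ((m:ℝ)+1)^(i+1) * (zr (n+1-i) * zr q)) := by
        intro i hi
        have hni : n+1+1-(i+1) = n+1-i := by omega
        rw [hni, pow_succ (-1:ℝ) i, pow_succ ((m:ℝ)+1) (i+1), ← div_div]
        ring
      rw [sum_congr rfl hc, ← mul_sum]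
      simp only [Nat.sub_zero, pow_one, pow_zero, zero_add]
      ring
    have hs2 : ∑ i ∈ range (n+1), (-1:ℝ)^(i+1) / ((m:ℝ)+1)^(i+1) * Jint m (n+1+1-i) (q-1)
        = -((m:ℝ)+1)⁻¹ * (∑ i ∈ range n, (-1:ℝ)^(i+1) / ((m:ℝ)+1)^(i+1) * Jint m (n+1-i) (q-1))
          - ((m:ℝ)+1)⁻¹ * Jint m (n+1+1) (q-1) := by
      rw [Finset.sum_range_succ' _ n]
      have hc : ∀ i ∈ range n, (-1:ℝ)^(i+1+1) / ((m:ℝ)+1)^(i+1+1) * Jint m (n+1+1-(i+1)) (q-1)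
          = (-((m:ℝ)+1)⁻¹) * ((-1:ℝ)^(i+1) / ((m:ℝ)+1)^(i+1) * Jint m (n+1-i) (q-1)) := by
        intro i hi
        have hni : n+1+1-(i+1) = n+1-i := by omega
        rw [hni, pow_succ (-1:ℝ) (i+1), pow_succ ((m:ℝ)+1) (i+1), ← div_div]
        ring
      rw [sum_congr rfl hc, ← mul_sum]
      simp only [Nat.sub_zero, pow_one, zero_add]
      ring
    have ht : (-1:ℝ)^(n+1) / ((m:ℝ)+1)^(n+1)
        = -((m:ℝ)+1)⁻¹ * ((-1:ℝ)^n / ((m:ℝ)+1)^n) := by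
      rw [pow_succ, pow_succ, ← div_div]
      ring
    rw [h2, ih, hs1, hs2, ht]
    ring

lemma coef_mul (M : ℝ) (a b : ℕ) (X : ℝ) :
    (-1:ℝ)^a / M^a * ((-1:ℝ)^b / M^b * X) = (-1:ℝ)^(a+b) / M^(a+b) * X := by
  rw [pow_add, pow_add, ← div_div]
  ring

lemma sum_Icc_eq_range18 (k : ℕ) (F : ℕ → ℝ) :
    ∑ x ∈ Icc 1 k, F x = ∑ j ∈ range k, F (j+1) := by
  rw [← Finset.Ico_add_one_right_eq_Icc, Finset.sum_Ico_eq_sum_range,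
    show k + 1 - 1 = k from rfl]
  exact sum_congr rfl fun j _ => by rw [Nat.add_comm 1 j]

lemma sum_Icc_succ_peel (k : ℕ) (F : ℕ → ℝ) :
    ∑ x ∈ Icc 1 (k+1), F x = (∑ j ∈ range k, F (j+2)) + F 1 := by
  rw [sum_Icc_eq_range18, Finset.sum_range_succ' _ k]

lemma key18 (hm : 0 ≤ m ∨ m = -2) {p : ℕ} (k : ℕ) (hk : 1 ≤ k) :
    ∀ s : ℕ, s + 2 ≤ p →
    Jint m (p - s) k =
      (∑ x ∈ Icc 1 (k-1), nest18 m p (x-1) s (fun t =>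
        ∑ i ∈ range (p - t - 1),
          (-1:ℝ)^i / ((m:ℝ)+1)^(i+1) * zr (p - t - i) * zr (k - x + 1)))
      + (∑ x ∈ Icc 1 (k-1), (-1:ℝ)^(p - s - 2 + x) / ((m:ℝ)+1)^(p - s - 2 + x)
          * Jint m 1 (k - x + 1) * (cnt18 p (x-1) s : ℝ))
      + nest18 m p (k-1) s (fun t => Jint m (p - t) 1) := by
  induction k, hk using Nat.le_induction with
  | base =>
    intro s hs
    simp [nest18]
  | succ k hk ih =>
    intro s hs
    obtain ⟨k', rfl⟩ : ∃ k', k = k'+1 := ⟨k-1, by omega⟩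
    have hu := unroll hm (show 2 ≤ p - s by omega) (show 2 ≤ k'+1+1 by omega)
    simp only [Nat.add_sub_cancel] at hu ⊢
    -- abbreviations
    set M : ℝ := (m:ℝ) + 1 with hM
    -- T2u rewritten via ih
    have hmid : ∀ i ∈ range (p-s-1),
        (-1:ℝ)^(i+1) / M^(i+1) * Jint m (p-s-i) (k'+1)
          = (-1:ℝ)^(i+1) / M^(i+1) * (
            (∑ x ∈ Icc 1 k', nest18 m p (x-1) (s+i) (fun t =>
              ∑ j ∈ range (p - t - 1),
                (-1:ℝ)^j / M^(j+1) * zr (p - t - j) * zr (k'+1 - x + 1)))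
            + (∑ x ∈ Icc 1 k', (-1:ℝ)^(p - (s+i) - 2 + x) / M^(p - (s+i) - 2 + x)
                * Jint m 1 (k'+1 - x + 1) * (cnt18 p (x-1) (s+i) : ℝ))
            + nest18 m p k' (s+i) (fun t => Jint m (p - t) 1)) := by
      intro i hi
      rw [mem_range] at hi
      have h1 : p - s - i = p - (s+i) := by omega
      have h2 := ih (s+i) (by omega)
      simp only [Nat.add_sub_cancel] at h2
      rw [h1, h2]
    rw [hu, sum_congr rfl hmid]
    simp only [mul_add]
    rw [Finset.sum_add_distrib, Finset.sum_add_distrib]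
    -- names: T1u, SA, SB, SC, tail
    have eq3 : nest18 m p (k'+1) s (fun t => Jint m (p - t) 1)
        = ∑ i ∈ range (p-s-1), (-1:ℝ)^(i+1)/M^(i+1)
            * nest18 m p k' (s+i) (fun t => Jint m (p - t) 1) := by
      simp [nest18, hM]
    have eq1 : (∑ x ∈ Icc 1 (k'+1), nest18 m p (x-1) s (fun t =>
          ∑ i ∈ range (p - t - 1),
            (-1:ℝ)^i / M^(i+1) * zr (p - t - i) * zr (k'+1+1 - x + 1)))
        = (∑ i ∈ range (p-s-1), (-1:ℝ)^(i+1)/M^(i+1) *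
            (∑ x ∈ Icc 1 k', nest18 m p (x-1) (s+i) (fun t =>
              ∑ j ∈ range (p - t - 1),
                (-1:ℝ)^j / M^(j+1) * zr (p - t - j) * zr (k'+1 - x + 1))))
          + ∑ i ∈ range (p-s-1), (-1:ℝ)^i / M^(i+1) * (zr (p-s-i) * zr (k'+1+1)) := by
      rw [sum_Icc_succ_peel]
      congr 1
      · -- peeled main part
        have hL : ∀ j ∈ range k', nest18 m p (j+2-1) s (fun t =>
              ∑ i ∈ range (p - t - 1),
                (-1:ℝ)^i / M^(i+1) * zr (p - t - i) * zr (k'+1+1 - (j+2) + 1))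
            = ∑ i ∈ range (p-s-1), (-1:ℝ)^(i+1)/M^(i+1)
                * nest18 m p j (s+i) (fun t =>
                  ∑ n ∈ range (p - t - 1),
                    (-1:ℝ)^n / M^(n+1) * zr (p - t - n) * zr (k'+1+1 - (j+2) + 1)) := by
          intro j hj
          rw [show j+2-1 = j+1 from rfl]
          simp [nest18, hM]
        rw [sum_congr rfl hL, Finset.sum_comm]
        apply sum_congr rfl
        intro i hi
        rw [← mul_sum]
        congr 1
        rw [sum_Icc_eq_range18]
        apply sum_congr rfl
        intro j hj
        congr 1
        funext t
        apply sum_congr rfl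
        intro n hn
        rw [show k'+1+1 - (j+2) + 1 = k'+1 - (j+1) + 1 by omega]
      · -- x = 1 term
        rw [show (1:ℕ)-1 = 0 from rfl]
        simp only [nest18]
        apply sum_congr rfl
        intro i hi
        rw [show k'+1+1-1+1 = k'+1+1 by omega, mul_assoc]
    have eq2 : (∑ x ∈ Icc 1 (k'+1), (-1:ℝ)^(p - s - 2 + x) / M^(p - s - 2 + x)
          * Jint m 1 (k'+1+1 - x + 1) * (cnt18 p (x-1) s : ℝ))
        = (∑ i ∈ range (p-s-1), (-1:ℝ)^(i+1)/M^(i+1) *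
            (∑ x ∈ Icc 1 k', (-1:ℝ)^(p - (s+i) - 2 + x) / M^(p - (s+i) - 2 + x)
              * Jint m 1 (k'+1 - x + 1) * (cnt18 p (x-1) (s+i) : ℝ)))
          + (-1:ℝ)^(p-s-1) / M^(p-s-1) * Jint m 1 (k'+1+1) := by
      have hR : ∀ i ∈ range (p-s-1), (-1:ℝ)^(i+1)/M^(i+1) *
          (∑ x ∈ Icc 1 k', (-1:ℝ)^(p - (s+i) - 2 + x) / M^(p - (s+i) - 2 + x)
            * Jint m 1 (k'+1 - x + 1) * (cnt18 p (x-1) (s+i) : ℝ))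
          = ∑ j ∈ range k', (-1:ℝ)^(p-s+j) / M^(p-s+j)
              * Jint m 1 (k'+1 - (j+1) + 1) * (cnt18 p j (s+i) : ℝ) := by
        intro i hi
        rw [mem_range] at hi
        rw [sum_Icc_eq_range18, mul_sum]
        apply sum_congr rfl
        intro j hj
        rw [show j+1-1 = j from rfl, mul_assoc, coef_mul,
          show i+1+(p - (s+i) - 2 + (j+1)) = p-s+j by omega, ← mul_assoc]
      rw [sum_congr rfl hR, sum_Icc_succ_peel]
      rw [Finset.sum_comm]
      congr 1
      · apply sum_congr rfl
        intro j hj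
        rw [show j+2-1 = j+1 from rfl, show p-s-2+(j+2) = p-s+j by omega,
          show k'+1+1-(j+2)+1 = k'+1-(j+1)+1 by omega]
        have hcnt : ((cnt18 p (j+1) s : ℕ) : ℝ) = ∑ i ∈ range (p-s-1), (cnt18 p j (s+i) : ℝ) := by
          rw [cnt18]
          push_cast
          rfl
        rw [hcnt, mul_sum]
      · rw [show p-s-2+1 = p-s-1 by omega, show k'+1+1-1+1 = k'+1+1 by omega,
          show (1:ℕ)-1 = 0 from rfl]
        simp [cnt18]
    rw [eq1, eq2, eq3]
    ring

theorem stmt18 (p q : ℕ) (hq : 1 ≤ q) (hpq : q ≤ p) (m : ℤ) (hm : 0 ≤ m ∨ m = -2) :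
    Jint m p q =
      (∑ x ∈ Finset.Icc 1 (q - 1), nest18 m p (x - 1) 0 (fun s =>
        ∑ i ∈ Finset.range (p - s - 1),
          ((-1 : ℝ) ^ i / ((m : ℝ) + 1) ^ (i + 1)) * zr (p - s - i) * zr (q - x + 1)))
      + (∑ x ∈ Finset.Icc 1 (q - 1),
          ((-1 : ℝ) ^ (p - 2 + x) / ((m : ℝ) + 1) ^ (p - 2 + x)) * Jint m 1 (q - x + 1)
            * (cnt18 p (x - 1) 0 : ℝ))
      + nest18 m p (q - 1) 0 (fun s => Jint m (p - s) 1) := by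
  rcases eq_or_lt_of_le hq with h1 | h2
  · subst h1
    simp [nest18]
  · have h := key18 (p := p) hm q hq 0 (by omega)
    simpa only [Nat.sub_zero] using h
end
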